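/- arXiv:1511.08095 — 2 statements merged into one kernel-verified Lean document; each statement's English description precedes it below -/
import Mathlib

section
/- Let γ = (γ₁,γ₂,γ₃) ∈ ℂ⟦t⟧³ with γᵢ(0) = 0 for all i and γ ≠ 0, and assume γ is primitive (gcd(Γ(γ)) = 1) and m(γ) ≥ 2. Assume ord(γ₁) = m(γ) is minimal among the orders of the nonzero γᵢ, so that γ₂/γ₁ and γ₃/γ₁ belong to ℂ⟦t⟧; let c₂, c₃ be their constant coefficients and let γ̃ = (γ₁, γ₂/γ₁ − c₂, γ₃/γ₁ − c₃) be the strict transform of γ under the blow-up of the origin of ℂ³. Then either m(γ̃) < m(γ), or m(γ̃) = m(γ) and n(γ̃) < n(γ). -/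
open MvPowerSeries in
/-- Substitution (composition) of formal power series:  `substPS v f` is the formal
power series `f (v 0, v 1, …)` obtained by substituting the family `v` of power series
into `f`.  When every `v i` has zero constant coefficient (the only case in which this
notion is used), the coefficient of a monomial `e` in `f (v 0, v 1, …)` is the finite
sum, over the multi-degrees `d` of total degree at most the total degree of `e`
(coordinatewise bounded by it), of `(coeff d f) * coeff e (∏ i, (v i) ^ d i)`;
this is the usual composition of formal power series. -/
noncomputable def substPS {σ τ : Type*} [Fintype σ] [DecidableEq σ] {R : Type*}
    [CommSemiring R] (v : σ → MvPowerSeries τ R) (f : MvPowerSeries σ R) :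
    MvPowerSeries τ R :=
  fun e => ∑ d ∈ Finset.Iic (Finsupp.equivFunOnFinite.symm
      fun _ : σ => e.sum fun _ n => n),
    MvPowerSeries.coeff d f * MvPowerSeries.coeff e (∏ i, (v i) ^ (d i))

/-- `Γ(γ)`, the semigroup of a parametrized space curve `γ = (γ₁,γ₂,γ₃) ∈ ℂ⟦t⟧³`
(with each `γᵢ(0) = 0`):  the set of orders `ord (f(γ₁,γ₂,γ₃))` for
`f ∈ ℂ⟦x,y,z⟧` with `f(γ₁,γ₂,γ₃) ≠ 0`. -/
def curveSemigroup (γ : Fin 3 → PowerSeries ℂ) : Set ℕ :=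
  {j : ℕ | ∃ f : MvPowerSeries (Fin 3) ℂ,
    substPS γ f ≠ 0 ∧ PowerSeries.order (substPS γ f) = (j : ℕ∞)}

/-- The parametrization `γ` is primitive:  `gcd (Γ(γ)) = 1`, i.e. the only natural
number dividing every element of `Γ(γ)` is `1`. -/
def curvePrimitive (γ : Fin 3 → PowerSeries ℂ) : Prop :=
  ∀ d : ℕ, (∀ j ∈ curveSemigroup γ, d ∣ j) → d = 1

/-- The multiplicity `m(γ) = min (Γ(γ) ∖ {0})`. -/
noncomputable def curveMult (γ : Fin 3 → PowerSeries ℂ) : ℕ :=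
  sInf {j ∈ curveSemigroup γ | j ≠ 0}

/-- `n(γ)`, the minimum of `Γ(γ)` with all multiples of `m(γ)` removed. -/
noncomputable def curveN (γ : Fin 3 → PowerSeries ℂ) : ℕ :=
  sInf {j ∈ curveSemigroup γ | ¬ curveMult γ ∣ j}

namespace Blowup

open MvPolynomial

noncomputable def DN (N : ℕ) : Fin 3 →₀ ℕ := Finsupp.equivFunOnFinite.symm fun _ => N

lemma DN_apply (N : ℕ) (i : Fin 3) : DN N i = N := rfl

lemma mem_Iic_DN {d : Fin 3 →₀ ℕ} {N : ℕ} : d ∈ Finset.Iic (DN N) ↔ ∀ i, d i ≤ N := by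
  simp [Finset.mem_Iic, Finsupp.le_def, DN_apply]

/-- total degree of a multidegree -/
def deg (d : Fin 3 →₀ ℕ) : ℕ := d 0 + d 1 + d 2

lemma single_le_deg (d : Fin 3 →₀ ℕ) (i : Fin 3) : d i ≤ deg d := by
  fin_cases i <;> simp [deg] <;> omega

lemma mem_Iic_DN_of_deg_le {d : Fin 3 →₀ ℕ} {N : ℕ} (h : deg d ≤ N) :
    d ∈ Finset.Iic (DN N) :=
  mem_Iic_DN.2 fun i => le_trans (single_le_deg d i) h

lemma deg_eq_zero_iff {d : Fin 3 →₀ ℕ} : deg d = 0 ↔ d = 0 := by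
  constructor
  · intro h
    ext i
    fin_cases i <;> simp_all [deg] <;> omega
  · rintro rfl; rfl

lemma coeff_substPS (v : Fin 3 → PowerSeries ℂ) (f : MvPowerSeries (Fin 3) ℂ) (N : ℕ) :
    PowerSeries.coeff N (substPS v f) =
      ∑ d ∈ Finset.Iic (DN N), MvPowerSeries.coeff d f *
        PowerSeries.coeff N (∏ i, (v i) ^ (d i)) := by
  have h : (Finsupp.single () N).sum (fun _ n => n) = N := by simp
  show (substPS v f) (Finsupp.single () N) = _
  rw [substPS]
  congr 1
  rw [DN, h]

lemma constantCoeff_substPS (v : Fin 3 → PowerSeries ℂ) (f : MvPowerSeries (Fin 3) ℂ) :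
    PowerSeries.constantCoeff (substPS v f) = MvPowerSeries.coeff 0 f := by
  have h := coeff_substPS v f 0
  rw [PowerSeries.coeff_zero_eq_constantCoeff] at h
  rw [h]
  have h0 : Finset.Iic (DN 0) = {0} := by
    ext d
    simp only [Finset.mem_singleton, mem_Iic_DN]
    constructor
    · intro h'; ext i; simpa using h' i
    · rintro rfl; simp
  rw [h0, Finset.sum_singleton]
  simp

/-- truncation of a power series to a polynomial -/
noncomputable def truncP (k : ℕ) (f : MvPowerSeries (Fin 3) ℂ) : MvPolynomial (Fin 3) ℂ :=
  ∑ d ∈ Finset.Iic (DN k), MvPolynomial.monomial d (MvPowerSeries.coeff d f)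

lemma coeff_truncP (k : ℕ) (f : MvPowerSeries (Fin 3) ℂ) (d : Fin 3 →₀ ℕ) :
    MvPolynomial.coeff d (truncP k f) =
      if d ∈ Finset.Iic (DN k) then MvPowerSeries.coeff d f else 0 := by
  rw [truncP, MvPolynomial.coeff_sum]
  by_cases h : d ∈ Finset.Iic (DN k)
  · rw [if_pos h, Finset.sum_eq_single_of_mem d h]
    · simp [MvPolynomial.coeff_monomial]
    · intro b _ hb
      simp [MvPolynomial.coeff_monomial, hb]
  · rw [if_neg h]
    refine Finset.sum_eq_zero fun b hb => ?_
    have hbd : b ≠ d := by rintro rfl; exact h hb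
    simp [MvPolynomial.coeff_monomial, hbd]

lemma one_le_order {v : PowerSeries ℂ} (hv : PowerSeries.constantCoeff v = 0) :
    1 ≤ v.order := by
  apply PowerSeries.nat_le_order
  intro i hi
  interval_cases i
  simpa using hv

lemma le_order_pow (v : PowerSeries ℂ) (hv : 1 ≤ v.order) (k : ℕ) :
    (k : ℕ∞) ≤ (v ^ k).order := by
  induction k with
  | zero => simp [PowerSeries.order_one]
  | succ k ih =>
      rw [pow_succ, PowerSeries.order_mul]
      push_cast
      exact add_le_add ih hv

lemma le_order_prod (v : Fin 3 → PowerSeries ℂ)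
    (hv : ∀ i, PowerSeries.constantCoeff (v i) = 0) (d : Fin 3 →₀ ℕ) :
    (deg d : ℕ∞) ≤ (∏ i, (v i) ^ (d i)).order := by
  have key : ∀ s : Finset (Fin 3),
      ((∑ i ∈ s, d i : ℕ) : ℕ∞) ≤ (∏ i ∈ s, (v i) ^ (d i)).order := by
    intro s
    induction s using Finset.induction with
    | empty => simp [PowerSeries.order_one]
    | @insert a s hx ih =>
        rw [Finset.sum_insert hx, Finset.prod_insert hx, PowerSeries.order_mul,
          Nat.cast_add]
        exact add_le_add (le_order_pow _ (one_le_order (hv a)) _) ih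
  have hdeg : deg d = ∑ i, d i := by rw [Fin.sum_univ_three]; rfl
  rw [hdeg]
  exact key Finset.univ

lemma coeff_prod_eq_zero (v : Fin 3 → PowerSeries ℂ)
    (hv : ∀ i, PowerSeries.constantCoeff (v i) = 0) {d : Fin 3 →₀ ℕ} {N : ℕ}
    (h : N < deg d) : PowerSeries.coeff N (∏ i, (v i) ^ (d i)) = 0 := by
  apply PowerSeries.coeff_of_lt_order
  exact lt_of_lt_of_le (by exact_mod_cast h) (le_order_prod v hv d)

lemma coeff_aeval_monomial (v : Fin 3 → PowerSeries ℂ) (d : Fin 3 →₀ ℕ) (a : ℂ) (N : ℕ) :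
    PowerSeries.coeff N (MvPolynomial.aeval v (MvPolynomial.monomial d a)) =
      a * PowerSeries.coeff N (∏ i, (v i) ^ (d i)) := by
  rw [MvPolynomial.aeval_monomial, Finsupp.prod_pow]
  have : (algebraMap ℂ (PowerSeries ℂ)) a = PowerSeries.C a := rfl
  rw [this]
  simp

/-- Main bridge: the `N`-th coefficient of the substitution is that of the
evaluation of the truncated polynomial. -/
lemma coeff_substPS_eq_aeval (v : Fin 3 → PowerSeries ℂ) (f : MvPowerSeries (Fin 3) ℂ)
    (N : ℕ) :
    PowerSeries.coeff N (substPS v f) =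
      PowerSeries.coeff N (MvPolynomial.aeval v (truncP N f)) := by
  rw [coeff_substPS, truncP, map_sum, map_sum]
  refine Finset.sum_congr rfl fun d _ => ?_
  rw [coeff_aeval_monomial]

lemma coeff_aeval_eq_zero (v : Fin 3 → PowerSeries ℂ)
    (hv : ∀ i, PowerSeries.constantCoeff (v i) = 0) (p : MvPolynomial (Fin 3) ℂ) (N : ℕ)
    (hp : ∀ d : Fin 3 →₀ ℕ, deg d ≤ N → MvPolynomial.coeff d p = 0) :
    PowerSeries.coeff N (MvPolynomial.aeval v p) = 0 := by
  conv_lhs => rw [p.as_sum, map_sum, map_sum]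
  refine Finset.sum_eq_zero fun d _ => ?_
  rw [coeff_aeval_monomial]
  rcases le_or_gt (deg d) N with h | h
  · rw [hp d h, zero_mul]
  · rw [coeff_prod_eq_zero v hv h, mul_zero]

lemma coeff_aeval_congr (v : Fin 3 → PowerSeries ℂ)
    (hv : ∀ i, PowerSeries.constantCoeff (v i) = 0) (p q : MvPolynomial (Fin 3) ℂ) (N : ℕ)
    (hpq : ∀ d : Fin 3 →₀ ℕ, deg d ≤ N → MvPolynomial.coeff d p = MvPolynomial.coeff d q) :
    PowerSeries.coeff N (MvPolynomial.aeval v p) =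
      PowerSeries.coeff N (MvPolynomial.aeval v q) := by
  have h : PowerSeries.coeff N (MvPolynomial.aeval v (p - q)) = 0 := by
    apply coeff_aeval_eq_zero v hv
    intro d hd
    rw [MvPolynomial.coeff_sub, hpq d hd, sub_self]
  rw [map_sub, map_sub] at h
  exact sub_eq_zero.mp h

/-! ### The blow-up substitution -/

noncomputable def AY (c : ℂ) (i : Fin 3) : MvPolynomial (Fin 3) ℂ := C c + X i

noncomputable def termQ (c₂ c₃ : ℂ) (d : Fin 3 →₀ ℕ) : MvPolynomial (Fin 3) ℂ :=
  X 0 ^ (deg d - 1) * (AY c₂ 1 ^ d 1 * AY c₃ 2 ^ d 2)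

noncomputable def wPoly (c₂ c₃ : ℂ) : Fin 3 → MvPolynomial (Fin 3) ℂ :=
  ![X 0, X 0 * AY c₂ 1, X 0 * AY c₃ 2]

lemma prod_wPoly (c₂ c₃ : ℂ) (d : Fin 3 →₀ ℕ) :
    ∏ i, (wPoly c₂ c₃ i) ^ d i = X 0 ^ deg d * (AY c₂ 1 ^ d 1 * AY c₃ 2 ^ d 2) := by
  rw [Fin.prod_univ_three]
  simp only [wPoly, Matrix.cons_val_zero, Matrix.cons_val_one, Matrix.head_cons,
    Matrix.cons_val_two, Matrix.tail_cons, deg]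
  rw [mul_pow, mul_pow, pow_add, pow_add]
  ring

lemma deg_add (u w : Fin 3 →₀ ℕ) : deg (u + w) = deg u + deg w := by
  simp [deg]; ring

lemma deg_single0 (s : ℕ) : deg (Finsupp.single (0 : Fin 3) s) = s := by
  simp [deg]

lemma coeff_termQ_eq_zero (c₂ c₃ : ℂ) (d e : Fin 3 →₀ ℕ) (h : deg e < deg d - 1) :
    MvPolynomial.coeff e (termQ c₂ c₃ d) = 0 := by
  rw [termQ, MvPolynomial.coeff_mul]
  refine Finset.sum_eq_zero fun x hx => ?_
  rw [Finset.HasAntidiagonal.mem_antidiagonal] at hx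
  rw [X_pow_eq_monomial, MvPolynomial.coeff_monomial]
  rcases eq_or_ne (Finsupp.single (0:Fin 3) (deg d - 1)) x.1 with heq | hne
  · exfalso
    have hsum : deg e = deg x.1 + deg x.2 := by rw [← hx, deg_add]
    rw [← heq, deg_single0] at hsum
    omega
  · rw [if_neg hne, zero_mul]

noncomputable def QPoly (c₂ c₃ : ℂ) (p : MvPolynomial (Fin 3) ℂ) : MvPolynomial (Fin 3) ℂ :=
  ∑ d ∈ p.support, C (MvPolynomial.coeff d p) * termQ c₂ c₃ d

lemma aeval_w_eq (c₂ c₃ : ℂ) (p : MvPolynomial (Fin 3) ℂ) (hp : MvPolynomial.coeff 0 p = 0) :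
    MvPolynomial.aeval (wPoly c₂ c₃) p = X 0 * QPoly c₂ c₃ p := by
  conv_lhs => rw [p.as_sum, map_sum]
  rw [QPoly, Finset.mul_sum]
  refine Finset.sum_congr rfl fun d hd => ?_
  rw [MvPolynomial.aeval_monomial, Finsupp.prod_pow, prod_wPoly]
  have hd0 : d ≠ 0 := by
    rintro rfl
    exact (MvPolynomial.mem_support_iff.mp hd) hp
  have hdeg : deg d ≠ 0 := fun h => hd0 (deg_eq_zero_iff.mp h)
  have hX : (X 0 : MvPolynomial (Fin 3) ℂ) ^ deg d = X 0 * X 0 ^ (deg d - 1) := by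
    conv_lhs => rw [← Nat.succ_pred_eq_of_pos (Nat.pos_of_ne_zero hdeg)]
    rw [pow_succ']
    rfl
  rw [hX, termQ]
  have halg : (algebraMap ℂ (MvPolynomial (Fin 3) ℂ)) (MvPolynomial.coeff d p) =
      C (MvPolynomial.coeff d p) := rfl
  rw [halg]
  ring

lemma coeff_QPoly_truncP (c₂ c₃ : ℂ) (k : ℕ) (f : MvPowerSeries (Fin 3) ℂ)
    (e : Fin 3 →₀ ℕ) :
    MvPolynomial.coeff e (QPoly c₂ c₃ (truncP k f)) =
      ∑ d ∈ Finset.Iic (DN k),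
        MvPowerSeries.coeff d f * MvPolynomial.coeff e (termQ c₂ c₃ d) := by
  rw [QPoly, MvPolynomial.coeff_sum]
  rw [Finset.sum_subset (fun d hd => ?_)]
  · refine Finset.sum_congr rfl fun d hd => ?_
    rw [MvPolynomial.coeff_C_mul, coeff_truncP, if_pos hd]
  · intro d _ hd
    rw [MvPolynomial.coeff_C_mul, MvPolynomial.notMem_support_iff.mp hd, zero_mul]
  · -- support of truncP k f ⊆ Iic (DN k)
    have := MvPolynomial.mem_support_iff.mp hd
    rw [coeff_truncP] at this
    by_contra hmem
    rw [if_neg hmem] at this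
    exact this rfl

lemma coeff_QPoly_stable (c₂ c₃ : ℂ) (f : MvPowerSeries (Fin 3) ℂ) {k k' : ℕ}
    (hkk' : k ≤ k') (e : Fin 3 →₀ ℕ) (hk : deg e + 1 ≤ k) :
    MvPolynomial.coeff e (QPoly c₂ c₃ (truncP k f)) =
      MvPolynomial.coeff e (QPoly c₂ c₃ (truncP k' f)) := by
  rw [coeff_QPoly_truncP, coeff_QPoly_truncP]
  apply Finset.sum_subset
  · intro d hd
    rw [mem_Iic_DN] at hd ⊢
    exact fun i => le_trans (hd i) hkk'
  · intro d _ hd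
    rw [mem_Iic_DN] at hd
    push_neg at hd
    obtain ⟨i, hi⟩ := hd
    have : deg e < deg d - 1 := by
      have := single_le_deg d i
      omega
    rw [coeff_termQ_eq_zero c₂ c₃ d e this, mul_zero]

/-- The strict transform of `f` under the blow-up substitution, as a power series. -/
noncomputable def Hs (c₂ c₃ : ℂ) (f : MvPowerSeries (Fin 3) ℂ) : MvPowerSeries (Fin 3) ℂ :=
  fun e => MvPolynomial.coeff e (QPoly c₂ c₃ (truncP (deg e + 1) f))

lemma coeff_Hs (c₂ c₃ : ℂ) (f : MvPowerSeries (Fin 3) ℂ) (e : Fin 3 →₀ ℕ) :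
    MvPowerSeries.coeff e (Hs c₂ c₃ f) =
      MvPolynomial.coeff e (QPoly c₂ c₃ (truncP (deg e + 1) f)) := rfl

end Blowup

open MvPolynomial in
lemma Blowup.main_identity (γ₁ δ₂ δ₃ : PowerSeries ℂ)
    (hc₁ : PowerSeries.constantCoeff γ₁ = 0)
    (f : MvPowerSeries (Fin 3) ℂ) (hf0 : MvPowerSeries.coeff 0 f = 0) :
    γ₁ * substPS ![γ₁, δ₂ - PowerSeries.C (PowerSeries.constantCoeff δ₂),
        δ₃ - PowerSeries.C (PowerSeries.constantCoeff δ₃)]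
      (Hs (PowerSeries.constantCoeff δ₂) (PowerSeries.constantCoeff δ₃) f) =
    substPS ![γ₁, γ₁ * δ₂, γ₁ * δ₃] f := by
  set c₂ := PowerSeries.constantCoeff δ₂ with hc2_def
  set c₃ := PowerSeries.constantCoeff δ₃ with hc3_def
  set gT : Fin 3 → PowerSeries ℂ :=
    ![γ₁, δ₂ - PowerSeries.C c₂, δ₃ - PowerSeries.C c₃] with hgT_def
  set gV : Fin 3 → PowerSeries ℂ := ![γ₁, γ₁ * δ₂, γ₁ * δ₃] with hgV_def
  have hgt : ∀ i, PowerSeries.constantCoeff (gT i) = 0 := by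
    intro i
    fin_cases i <;> simp [hgT_def, hc₁, hc2_def, hc3_def]
  have hgv : ∀ i, PowerSeries.constantCoeff (gV i) = 0 := by
    intro i
    fin_cases i <;> simp [hgV_def, hc₁]
  apply PowerSeries.ext
  intro N
  set p := truncP (N + 1) f with hp_def
  have hp0 : MvPolynomial.coeff 0 p = 0 := by
    rw [hp_def, coeff_truncP, if_pos (mem_Iic_DN_of_deg_le (by simp [deg]))]
    exact hf0
  have stepA : ∀ j ≤ N, PowerSeries.coeff j (substPS gT (Hs c₂ c₃ f)) =
      PowerSeries.coeff j (MvPolynomial.aeval gT (QPoly c₂ c₃ p)) := by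
    intro j hj
    rw [coeff_substPS_eq_aeval]
    apply coeff_aeval_congr gT hgt
    intro d hd
    rw [coeff_truncP, if_pos (mem_Iic_DN_of_deg_le hd), coeff_Hs]
    exact coeff_QPoly_stable c₂ c₃ f (by omega) d (by omega)
  have stepB : PowerSeries.coeff N (γ₁ * substPS gT (Hs c₂ c₃ f)) =
      PowerSeries.coeff N (γ₁ * MvPolynomial.aeval gT (QPoly c₂ c₃ p)) := by
    rw [PowerSeries.coeff_mul, PowerSeries.coeff_mul]
    refine Finset.sum_congr rfl fun x hx => ?_
    rw [Finset.HasAntidiagonal.mem_antidiagonal] at hx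
    rw [stepA x.2 (by omega)]
  have hwi : ∀ i, MvPolynomial.aeval gT (wPoly c₂ c₃ i) = gV i := by
    intro i
    have halg : ∀ a : ℂ, (algebraMap ℂ (PowerSeries ℂ)) a = PowerSeries.C a :=
      fun _ => rfl
    fin_cases i <;>
      simp [wPoly, AY, hgT_def, hgV_def, halg] <;> ring
  have hcomp : MvPolynomial.aeval gT (MvPolynomial.aeval (wPoly c₂ c₃) p)
      = MvPolynomial.aeval gV p := by
    have h2 := MvPolynomial.comp_aeval_apply (f := wPoly c₂ c₃)
      (MvPolynomial.aeval gT) p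
    rw [funext hwi] at h2
    exact h2
  have stepC : γ₁ * MvPolynomial.aeval gT (QPoly c₂ c₃ p) =
      MvPolynomial.aeval gV p := by
    rw [← hcomp, aeval_w_eq c₂ c₃ p hp0, map_mul, MvPolynomial.aeval_X]
    have : gT 0 = γ₁ := rfl
    rw [this]
  rw [stepB, stepC, coeff_substPS_eq_aeval]
  apply coeff_aeval_congr gV hgv
  intro d hd
  rw [hp_def, coeff_truncP, coeff_truncP, if_pos (mem_Iic_DN_of_deg_le (by omega)),
    if_pos (mem_Iic_DN_of_deg_le hd)]

open PowerSeries in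
lemma Blowup.substPS_X0 (v : Fin 3 → PowerSeries ℂ)
    (hv0 : PowerSeries.constantCoeff (v 0) = 0) :
    substPS v (MvPowerSeries.X 0 : MvPowerSeries (Fin 3) ℂ) = v 0 := by
  apply PowerSeries.ext
  intro N
  rw [coeff_substPS_eq_aeval]
  cases N with
  | zero =>
      rw [← coeff_substPS_eq_aeval, PowerSeries.coeff_zero_eq_constantCoeff,
        constantCoeff_substPS, MvPowerSeries.coeff_zero_X]
      exact hv0.symm
  | succ N =>
      have htr : truncP (N + 1) (MvPowerSeries.X 0 : MvPowerSeries (Fin 3) ℂ) =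
          MvPolynomial.X 0 := by
        apply MvPolynomial.ext
        intro d
        rw [coeff_truncP, MvPolynomial.coeff_X']
        by_cases h : d ∈ Finset.Iic (DN (N + 1))
        · rw [if_pos h, MvPowerSeries.coeff_X]
          by_cases he : d = Finsupp.single 0 1
          · rw [if_pos he, if_pos he.symm]
          · rw [if_neg he, if_neg (fun hc => he hc.symm)]
        · rw [if_neg h, if_neg]
          intro hc
          apply h
          apply mem_Iic_DN.2
          intro i
          rw [← hc]
          by_cases hi : i = 0
          · subst hi; simp
          · rw [Finsupp.single_apply, if_neg (fun hc' => hi hc'.symm)]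
            omega
      rw [htr, MvPolynomial.aeval_X]

open PowerSeries in
/-- Let `γ = (γ₁,γ₂,γ₃) ∈ ℂ⟦t⟧³` with `γᵢ(0) = 0` for all `i` and `γ ≠ 0`, and assume
`γ` is primitive and `m(γ) ≥ 2`.  Assume `ord(γ₁) = m(γ)` is minimal among the orders
of the nonzero `γᵢ`, so that `γ₂/γ₁` and `γ₃/γ₁` belong to `ℂ⟦t⟧` (say `γ₂ = γ₁·δ₂`,
`γ₃ = γ₁·δ₃`); let `c₂, c₃` be their constant coefficients and let
`γ̃ = (γ₁, γ₂/γ₁ − c₂, γ₃/γ₁ − c₃)` be the strict transform of `γ` under the blow-up of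
the origin of `ℂ³`.  Then either `m(γ̃) < m(γ)`, or `m(γ̃) = m(γ)` and `n(γ̃) < n(γ)`. -/
theorem strict_transform_point_blowup_decreases (γ₁ γ₂ γ₃ : PowerSeries ℂ)
    (hc₁ : constantCoeff γ₁ = 0) (hc₂ : constantCoeff γ₂ = 0)
    (hc₃ : constantCoeff γ₃ = 0)
    (hne : ¬(γ₁ = 0 ∧ γ₂ = 0 ∧ γ₃ = 0))
    (hprim : curvePrimitive ![γ₁, γ₂, γ₃])
    (hm : 2 ≤ curveMult ![γ₁, γ₂, γ₃])
    (h₁ : γ₁ ≠ 0)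
    (hord : order γ₁ = (curveMult ![γ₁, γ₂, γ₃] : ℕ∞))
    (hord₂ : order γ₁ ≤ order γ₂) (hord₃ : order γ₁ ≤ order γ₃)
    (δ₂ δ₃ : PowerSeries ℂ) (hδ₂ : γ₂ = γ₁ * δ₂) (hδ₃ : γ₃ = γ₁ * δ₃) :
    curveMult ![γ₁, δ₂ - C (constantCoeff δ₂), δ₃ - C (constantCoeff δ₃)] <
        curveMult ![γ₁, γ₂, γ₃] ∨
      (curveMult ![γ₁, δ₂ - C (constantCoeff δ₂), δ₃ - C (constantCoeff δ₃)] =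
          curveMult ![γ₁, γ₂, γ₃] ∧
        curveN ![γ₁, δ₂ - C (constantCoeff δ₂), δ₃ - C (constantCoeff δ₃)] <
          curveN ![γ₁, γ₂, γ₃]) := by
  classical
  set γv : Fin 3 → PowerSeries ℂ := ![γ₁, γ₂, γ₃] with hγv_def
  set γt : Fin 3 → PowerSeries ℂ :=
    ![γ₁, δ₂ - C (constantCoeff δ₂), δ₃ - C (constantCoeff δ₃)] with hγt_def
  set m := curveMult γv with hm_def
  have hm0 : m ≠ 0 := by omega
  -- `m ∈ Γ(γ̃)` via `f = X 0`
  have hXmem : substPS γt (MvPowerSeries.X 0 : MvPowerSeries (Fin 3) ℂ) = γ₁ :=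
    Blowup.substPS_X0 γt (by rw [hγt_def]; simpa using hc₁)
  have hm_mem : m ∈ {j ∈ curveSemigroup γt | j ≠ 0} := by
    refine ⟨⟨MvPowerSeries.X 0, ?_, ?_⟩, hm0⟩
    · rw [hXmem]; exact h₁
    · rw [hXmem]; exact hord
  have hmt_le : curveMult γt ≤ m := Nat.sInf_le hm_mem
  rcases lt_or_eq_of_le hmt_le with hlt | heq
  · exact Or.inl hlt
  · right
    refine ⟨heq, ?_⟩
    -- the set defining `n(γ)` is nonempty
    set T := {j ∈ curveSemigroup γv | ¬ m ∣ j} with hT_def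
    have hTne : T.Nonempty := by
      by_contra hT
      rw [Set.not_nonempty_iff_eq_empty] at hT
      have hall : ∀ j ∈ curveSemigroup γv, m ∣ j := by
        intro j hj
        by_contra hdvd
        have : j ∈ T := ⟨hj, hdvd⟩
        rw [hT] at this
        exact this
      have := hprim m hall
      omega
    have hnmem : curveN γv ∈ T := Nat.sInf_mem hTne
    set n := curveN γv with hn_def
    obtain ⟨⟨f, hfne, hford⟩, hndvd⟩ := hnmem
    have hn0 : n ≠ 0 := fun h => hndvd (h ▸ dvd_zero m)
    -- `f` has zero constant term
    have hf0 : MvPowerSeries.coeff 0 f = 0 := by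
      by_contra hf0
      have : PowerSeries.order (substPS γv f) ≤ 0 := by
        apply PowerSeries.order_le
        rw [PowerSeries.coeff_zero_eq_constantCoeff, Blowup.constantCoeff_substPS]
        exact hf0
      rw [hford] at this
      have : n ≤ 0 := by exact_mod_cast this
      omega
    -- the main identity
    have hvid : γv = ![γ₁, γ₁ * δ₂, γ₁ * δ₃] := by
      rw [hγv_def, hδ₂, hδ₃]
    have key : γ₁ * substPS γt
        (Blowup.Hs (constantCoeff δ₂) (constantCoeff δ₃) f) = substPS γv f := by
      rw [hvid]
      exact Blowup.main_identity γ₁ δ₂ δ₃ hc₁ f hf0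
    set h := substPS γt (Blowup.Hs (constantCoeff δ₂) (constantCoeff δ₃) f) with hh_def
    have hhne : h ≠ 0 := by
      rintro h0
      rw [h0, mul_zero] at key
      exact hfne key.symm
    have horder : (m : ℕ∞) + PowerSeries.order h = (n : ℕ∞) := by
      rw [← hord, ← PowerSeries.order_mul, key, hford]
    have hhtop : PowerSeries.order h ≠ ⊤ := by
      intro htop
      rw [htop, add_top] at horder
      exact (ENat.coe_ne_top n) horder.symm
    lift PowerSeries.order h to ℕ using hhtop with ℓ hℓ
    have hmn : m + ℓ = n := by exact_mod_cast horder
    have hℓmem : ℓ ∈ {j ∈ curveSemigroup γt | ¬ curveMult γt ∣ j} := by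
      refine ⟨⟨Blowup.Hs (constantCoeff δ₂) (constantCoeff δ₃) f, hhne, hℓ.symm ▸ rfl⟩, ?_⟩
      rw [heq]
      intro hdvd
      exact hndvd (hmn ▸ dvd_add (dvd_refl m) hdvd)
    have : curveN γt ≤ ℓ := Nat.sInf_le hℓmem
    omega
end

section
/- Let γ = (γ₁,γ₂,γ₃) ∈ ℂ⟦t⟧³ with γᵢ(0) = 0 for all i and γ ≠ 0, and assume γ is primitive (gcd(Γ(γ)) = 1) and m(γ) ≥ 2. Assume γ₂ ≠ 0 and ord(γ₂) ≤ ord(γ₃) (if γ₃ ≠ 0), so that γ₃/γ₂ ∈ ℂ⟦t⟧; let c be its constant coefficient and let γ̃ = (γ₁, γ₂, γ₃/γ₂ − c) be the strict transform of γ under the blow-up of ℂ³ along the line {y = z = 0}. Then either m(γ̃) < m(γ), or m(γ̃) = m(γ) and n(γ̃) ≤ n(γ). -/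
section Aux

open MvPowerSeries

/-- total degree of a finsupp exponent -/
def tdeg {τ : Type*} (e : τ →₀ ℕ) : ℕ := e.sum fun _ n => n

lemma tdeg_add {τ : Type*} (a b : τ →₀ ℕ) : tdeg (a + b) = tdeg a + tdeg b := by
  unfold tdeg
  exact Finsupp.sum_add_index' (fun _ => rfl) (fun _ _ _ => rfl)

lemma tdeg_eq_zero {τ : Type*} {e : τ →₀ ℕ} (h : tdeg e = 0) : e = 0 := by
  ext a
  simp only [Finsupp.coe_zero, Pi.zero_apply]
  by_contra ha
  exact ha (Finset.sum_eq_zero_iff.mp h a (Finsupp.mem_support_iff.mpr ha))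

/-- `u` has order at least `n` -/
def lowOrd {τ R : Type*} [CommSemiring R] (n : ℕ) (u : MvPowerSeries τ R) : Prop :=
  ∀ e : τ →₀ ℕ, tdeg e < n → coeff e u = 0

lemma lowOrd_mul {τ R : Type*} [CommSemiring R] {m n : ℕ} {a b : MvPowerSeries τ R}
    (ha : lowOrd m a) (hb : lowOrd n b) : lowOrd (m + n) (a * b) := by
  classical
  intro e he
  rw [coeff_mul]
  apply Finset.sum_eq_zero
  intro p hp
  rw [Finset.HasAntidiagonal.mem_antidiagonal] at hp
  have : tdeg p.1 + tdeg p.2 = tdeg e := by rw [← tdeg_add, hp]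
  rcases lt_or_ge (tdeg p.1) m with h | h
  · rw [ha p.1 h, zero_mul]
  · rw [hb p.2 (by omega), mul_zero]

lemma lowOrd_pow {τ R : Type*} [CommSemiring R] {u : MvPowerSeries τ R}
    (hu : constantCoeff u = 0) (n : ℕ) : lowOrd n (u ^ n) := by
  induction n with
  | zero => intro e he; omega
  | succ k ih =>
      rw [pow_succ]
      have h1 : lowOrd 1 u := by
        intro e he
        have : e = 0 := tdeg_eq_zero (by omega)
        rw [this]; exact hu
      exact lowOrd_mul ih h1

lemma lowOrd_prod {σ τ R : Type*} [Fintype σ] [CommSemiring R]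
    {v : σ → MvPowerSeries τ R} (hv : ∀ i, constantCoeff (v i) = 0)
    (d : σ → ℕ) (s : Finset σ) : lowOrd (∑ i ∈ s, d i) (∏ i ∈ s, v i ^ d i) := by
  classical
  induction s using Finset.cons_induction with
  | empty => simp; intro e he; omega
  | cons i s hi ih =>
      rw [Finset.sum_cons, Finset.prod_cons]
      exact lowOrd_mul (lowOrd_pow (hv i) (d i)) ih

/-- the box of exponents -/
noncomputable def eBox (σ : Type*) [Fintype σ] [DecidableEq σ] (N : ℕ) : Finset (σ →₀ ℕ) :=
  Finset.Iic (Finsupp.equivFunOnFinite.symm fun _ : σ => N)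

lemma coeff_substPS {σ τ : Type*} [Fintype σ] [DecidableEq σ] {R : Type*} [CommSemiring R]
    (v : σ → MvPowerSeries τ R) (f : MvPowerSeries σ R) (e : τ →₀ ℕ) :
    coeff e (substPS v f) =
      ∑ d ∈ eBox σ (tdeg e), coeff d f * coeff e (∏ i, (v i) ^ (d i)) := rfl

/-- key vanishing: if some coordinate of d exceeds tdeg e -/
lemma coeff_prod_pow_eq_zero {σ τ : Type*} [Fintype σ] [DecidableEq σ] {R : Type*}
    [CommSemiring R] {v : σ → MvPowerSeries τ R} (hv : ∀ i, constantCoeff (v i) = 0)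
    {d : σ →₀ ℕ} {e : τ →₀ ℕ} (h : d ∉ eBox σ (tdeg e)) :
    coeff e (∏ i, (v i) ^ (d i)) = 0 := by
  classical
  have hd : ∃ i, tdeg e < d i := by
    by_contra hc
    push_neg at hc
    exact h (Finset.mem_Iic.mpr (Finsupp.le_def.mpr (fun i => by
      simpa using hc i)))
  obtain ⟨i, hi⟩ := hd
  refine lowOrd_prod hv (fun i => d i) Finset.univ e ?_
  calc tdeg e < d i := hi
    _ ≤ ∑ j, d j := Finset.single_le_sum (fun _ _ => Nat.zero_le _) (Finset.mem_univ i)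

lemma coeff_substPS_superset {σ τ : Type*} [Fintype σ] [DecidableEq σ] {R : Type*}
    [CommSemiring R] {v : σ → MvPowerSeries τ R} (hv : ∀ i, constantCoeff (v i) = 0)
    (f : MvPowerSeries σ R) (e : τ →₀ ℕ) {S : Finset (σ →₀ ℕ)} (hS : eBox σ (tdeg e) ⊆ S) :
    coeff e (substPS v f) = ∑ d ∈ S, coeff d f * coeff e (∏ i, (v i) ^ (d i)) := by
  rw [coeff_substPS]
  apply Finset.sum_subset hS
  intro d _ hd
  rw [coeff_prod_pow_eq_zero hv hd, mul_zero]

lemma substPS_sum {σ τ : Type*} [Fintype σ] [DecidableEq σ] {R : Type*} [CommSemiring R]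
    (v : σ → MvPowerSeries τ R) {ι : Type*} (s : Finset ι) (g : ι → MvPowerSeries σ R) :
    substPS v (∑ k ∈ s, g k) = ∑ k ∈ s, substPS v (g k) := by
  ext e
  rw [coeff_substPS]
  rw [map_sum (coeff e)]
  simp_rw [coeff_substPS, map_sum, Finset.sum_mul]
  exact Finset.sum_comm

lemma substPS_monomial {σ τ : Type*} [Fintype σ] [DecidableEq σ] {R : Type*} [CommSemiring R]
    {v : σ → MvPowerSeries τ R} (hv : ∀ i, constantCoeff (v i) = 0)
    (d : σ →₀ ℕ) (r : R) :
    substPS v ((monomial d) r) = r • ∏ i, (v i) ^ (d i) := by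
  ext e
  rw [coeff_substPS, map_smul]
  by_cases hd : d ∈ eBox σ (tdeg e)
  · rw [Finset.sum_eq_single d]
    · rw [coeff_monomial_same]; rfl
    · intro b _ hb; rw [coeff_monomial_ne hb, zero_mul]
    · intro hnd; exact absurd hd hnd
  · rw [coeff_prod_pow_eq_zero hv hd, smul_zero]
    apply Finset.sum_eq_zero
    intro b hb
    rcases eq_or_ne b d with h | h
    · subst h; exact absurd hb hd
    · rw [coeff_monomial_ne h, zero_mul]

/-- `substPS` on (coercions of) polynomials agrees with `aeval`. -/
lemma substPS_coe {σ τ : Type*} [Fintype σ] [DecidableEq σ] {R : Type*} [CommRing R]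
    {v : σ → MvPowerSeries τ R} (hv : ∀ i, constantCoeff (v i) = 0)
    (P : MvPolynomial σ R) :
    substPS v (↑P : MvPowerSeries σ R) = MvPolynomial.aeval v P := by
  classical
  have hcoe : (↑P : MvPowerSeries σ R)
      = ∑ d ∈ P.support, ↑(MvPolynomial.monomial d (MvPolynomial.coeff d P)) := by
    simp_rw [← MvPolynomial.coeToMvPowerSeries.ringHom_apply]
    rw [← map_sum, ← P.as_sum]
  rw [hcoe, substPS_sum]
  conv_rhs => rw [P.as_sum]
  rw [map_sum]
  apply Finset.sum_congr rfl
  intro d hd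
  rw [MvPolynomial.coe_monomial, substPS_monomial hv, MvPolynomial.aeval_monomial]
  rw [Algebra.smul_def]
  congr 1
  exact (Finsupp.prod_fintype _ _ (fun i => pow_zero _)).symm

lemma eBox_mono (σ : Type*) [Fintype σ] [DecidableEq σ] {a b : ℕ} (h : a ≤ b) :
    eBox σ a ⊆ eBox σ b := by
  apply Finset.Iic_subset_Iic.mpr
  rw [Finsupp.le_def]
  intro i
  simp [h]

lemma tdeg_le_of_mem_eBox {σ : Type*} [Fintype σ] [DecidableEq σ] {N : ℕ} {d : σ →₀ ℕ}
    (hd : d ∈ eBox σ N) : tdeg d ≤ Fintype.card σ * N := by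
  have h : ∀ i, d i ≤ N := by
    intro i
    have := Finset.mem_Iic.mp hd
    simpa using Finsupp.le_def.mp this i
  calc tdeg d = ∑ i ∈ d.support, d i := rfl
    _ ≤ ∑ i : σ, d i := Finset.sum_le_sum_of_subset (Finset.subset_univ _)
    _ ≤ ∑ _i : σ, N := Finset.sum_le_sum (fun i _ => h i)
    _ = Fintype.card σ * N := by rw [Finset.sum_const, Finset.card_univ, smul_eq_mul]

/-- Composition law: substituting `u` into `f(w)` (with `w` polynomial with zero constant
coefficients) is substituting `aeval u w` into `f`. -/
theorem substPS_comp {σ σ' τ : Type*} [Fintype σ] [DecidableEq σ] [Fintype σ']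
    [DecidableEq σ'] {R : Type*} [CommRing R]
    (u : σ' → MvPowerSeries τ R) (hu : ∀ j, constantCoeff (u j) = 0)
    (w : σ → MvPolynomial σ' R)
    (hw : ∀ i, constantCoeff (↑(w i) : MvPowerSeries σ' R) = 0)
    (hg : ∀ i, constantCoeff (MvPolynomial.aeval u (w i)) = 0)
    (f : MvPowerSeries σ R) :
    substPS u (substPS (fun i => (↑(w i) : MvPowerSeries σ' R)) f) =
      substPS (fun i => MvPolynomial.aeval u (w i)) f := by
  classical
  ext e
  set N := tdeg e with hN
  set D : Finset (σ →₀ ℕ) := eBox σ (N + Fintype.card σ' * N) with hD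
  rw [coeff_substPS]
  have step1 : ∀ d ∈ eBox σ' N,
      coeff d (substPS (fun i => (↑(w i) : MvPowerSeries σ' R)) f) =
        ∑ d' ∈ D, coeff d' f * coeff d (∏ i, (↑(w i) : MvPowerSeries σ' R) ^ (d' i)) := by
    intro d hd
    apply coeff_substPS_superset hw
    apply eBox_mono
    have := tdeg_le_of_mem_eBox hd
    omega
  rw [Finset.sum_congr rfl (fun d hd => by rw [step1 d hd])]
  simp_rw [Finset.sum_mul, mul_assoc]
  rw [Finset.sum_comm]
  simp_rw [← Finset.mul_sum]
  have step2 : ∀ d' ∈ D,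
      (∑ d ∈ eBox σ' N, coeff d (∏ i, (↑(w i) : MvPowerSeries σ' R) ^ (d' i)) *
          coeff e (∏ j, (u j) ^ (d j))) =
        coeff e (∏ i, (MvPolynomial.aeval u (w i)) ^ (d' i)) := by
    intro d' _
    have h1 : (∏ i, (↑(w i) : MvPowerSeries σ' R) ^ (d' i))
        = (↑(∏ i, (w i) ^ (d' i)) : MvPowerSeries σ' R) := by
      simp only [← MvPolynomial.coeToMvPowerSeries.ringHom_apply, ← map_pow, ← map_prod]
    have h2 : substPS u (∏ i, (↑(w i) : MvPowerSeries σ' R) ^ (d' i))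
        = ∏ i, (MvPolynomial.aeval u (w i)) ^ (d' i) := by
      rw [h1, substPS_coe hu, map_prod]
      simp
    rw [← h2, coeff_substPS]
  rw [Finset.sum_congr rfl (fun d' hd' => by rw [step2 d' hd'])]
  exact (coeff_substPS_superset hg f e
    (eBox_mono σ (Nat.le_add_right N (Fintype.card σ' * N)))).symm

open PowerSeries in
/-- The semigroup of the curve is contained in that of the strict transform. -/
lemma semigroup_subset_transform (γ₁ γ₂ γ₃ : PowerSeries ℂ)
    (hc₁ : PowerSeries.constantCoeff γ₁ = 0) (hc₂ : PowerSeries.constantCoeff γ₂ = 0)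
    (hc₃ : PowerSeries.constantCoeff γ₃ = 0)
    (δ : PowerSeries ℂ) (hδ : γ₃ = γ₂ * δ) :
    curveSemigroup ![γ₁, γ₂, γ₃] ⊆
      curveSemigroup ![γ₁, γ₂, δ - PowerSeries.C (PowerSeries.constantCoeff δ)] := by
  classical
  set c : ℂ := PowerSeries.constantCoeff δ with hc
  set γt : Fin 3 → PowerSeries ℂ := ![γ₁, γ₂, δ - PowerSeries.C c] with hγt
  set w : Fin 3 → MvPolynomial (Fin 3) ℂ :=
    ![MvPolynomial.X 0, MvPolynomial.X 1,
      MvPolynomial.X 1 * (MvPolynomial.C c + MvPolynomial.X 2)] with hw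
  have hu : ∀ j, PowerSeries.constantCoeff (γt j) = 0 := by
    intro j
    fin_cases j <;> simp [hγt, hc₁, hc₂, hc]
  have hwc : ∀ i, MvPowerSeries.constantCoeff
      ((↑(w i) : MvPowerSeries (Fin 3) ℂ)) = 0 := by
    intro i
    fin_cases i <;>
      simp [hw, map_mul, map_add, MvPowerSeries.constantCoeff_X]
  have haev : ∀ i, MvPolynomial.aeval γt (w i) = ![γ₁, γ₂, γ₃] i := by
    intro i
    fin_cases i
    · simp [hw, hγt]
    · simp [hw, hγt]
    · show MvPolynomial.aeval γt (MvPolynomial.X 1 *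
            (MvPolynomial.C c + MvPolynomial.X 2)) = γ₃
      rw [show MvPolynomial.aeval γt (MvPolynomial.X 1 *
            (MvPolynomial.C c + MvPolynomial.X 2))
          = γt 1 * (algebraMap ℂ (PowerSeries ℂ) c + γt 2) by simp]
      rw [PowerSeries.algebraMap_apply]
      simp only [hγt]
      show γ₂ * (PowerSeries.C ((algebraMap ℂ ℂ) c) + (δ - PowerSeries.C c)) = γ₃
      rw [Algebra.algebraMap_self_apply]
      rw [hδ]
      ring
  have hg : ∀ i, PowerSeries.constantCoeff (MvPolynomial.aeval γt (w i)) = 0 := by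
    intro i
    rw [haev i]
    fin_cases i <;> simpa using by assumption
  intro j hj
  obtain ⟨f, hf, hord⟩ := hj
  have hfun : (fun i => MvPolynomial.aeval γt (w i)) = ![γ₁, γ₂, γ₃] := funext haev
  have key : substPS γt (substPS (fun i => (↑(w i) : MvPowerSeries (Fin 3) ℂ)) f)
      = substPS ![γ₁, γ₂, γ₃] f := by
    rw [substPS_comp γt hu w hwc hg f, hfun]
  exact ⟨substPS (fun i => (↑(w i) : MvPowerSeries (Fin 3) ℂ)) f,
    by rw [key]; exact hf, by rw [key]; exact hord⟩

end Aux

open PowerSeries in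
/-- Let `γ = (γ₁,γ₂,γ₃) ∈ ℂ⟦t⟧³` with `γᵢ(0) = 0` for all `i` and `γ ≠ 0`, and assume
`γ` is primitive and `m(γ) ≥ 2`.  Assume `γ₂ ≠ 0` and `ord(γ₂) ≤ ord(γ₃)` (automatic
if `γ₃ = 0`, since `ord 0 = ∞`), so that `γ₃/γ₂ ∈ ℂ⟦t⟧` (say `γ₃ = γ₂·δ`); let `c` be
its constant coefficient and let `γ̃ = (γ₁, γ₂, γ₃/γ₂ − c)` be the strict transform of
`γ` under the blow-up of `ℂ³` along the line `{y = z = 0}`.  Then either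
`m(γ̃) < m(γ)`, or `m(γ̃) = m(γ)` and `n(γ̃) ≤ n(γ)`. -/
theorem strict_transform_line_blowup_does_not_increase (γ₁ γ₂ γ₃ : PowerSeries ℂ)
    (hc₁ : constantCoeff γ₁ = 0) (hc₂ : constantCoeff γ₂ = 0)
    (hc₃ : constantCoeff γ₃ = 0)
    (hne : ¬(γ₁ = 0 ∧ γ₂ = 0 ∧ γ₃ = 0))
    (hprim : curvePrimitive ![γ₁, γ₂, γ₃])
    (hm : 2 ≤ curveMult ![γ₁, γ₂, γ₃])
    (h₂ : γ₂ ≠ 0)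
    (hord₃ : order γ₂ ≤ order γ₃)
    (δ : PowerSeries ℂ) (hδ : γ₃ = γ₂ * δ) :
    curveMult ![γ₁, γ₂, δ - C (constantCoeff δ)] < curveMult ![γ₁, γ₂, γ₃] ∨
      (curveMult ![γ₁, γ₂, δ - C (constantCoeff δ)] = curveMult ![γ₁, γ₂, γ₃] ∧
        curveN ![γ₁, γ₂, δ - C (constantCoeff δ)] ≤ curveN ![γ₁, γ₂, γ₃]) := by
  have hsub := semigroup_subset_transform γ₁ γ₂ γ₃ hc₁ hc₂ hc₃ δ hδ
  set γ := ![γ₁, γ₂, γ₃] with hγ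
  set γt := ![γ₁, γ₂, δ - C (constantCoeff δ)] with hγt
  set m := curveMult γ with hmdef
  have hmne : {j ∈ curveSemigroup γ | j ≠ 0}.Nonempty := by
    by_contra h
    rw [Set.not_nonempty_iff_eq_empty] at h
    have : m = 0 := by rw [hmdef, curveMult, h, Nat.sInf_empty]
    omega
  have hmmem : m ∈ {j ∈ curveSemigroup γ | j ≠ 0} := Nat.sInf_mem hmne
  have hmt_le : curveMult γt ≤ m := by
    apply Nat.sInf_le
    exact ⟨hsub hmmem.1, hmmem.2⟩
  rcases lt_or_eq_of_le hmt_le with h | h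
  · exact Or.inl h
  · right
    refine ⟨h, ?_⟩
    have hnne : {j ∈ curveSemigroup γ | ¬ m ∣ j}.Nonempty := by
      by_contra hcon
      rw [Set.not_nonempty_iff_eq_empty] at hcon
      have hall : ∀ j ∈ curveSemigroup γ, m ∣ j := by
        intro j hj
        by_contra hdvd
        have : j ∈ {j ∈ curveSemigroup γ | ¬ m ∣ j} := ⟨hj, hdvd⟩
        rw [hcon] at this
        exact this
      have := hprim m hall
      omega
    have hnmem : curveN γ ∈ {j ∈ curveSemigroup γ | ¬ m ∣ j} := Nat.sInf_mem hnne
    apply Nat.sInf_le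
    exact ⟨hsub hnmem.1, by rw [h]; exact hnmem.2⟩
end
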